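/- If the verification algorithm that iteratively checks P^{≤k} and P^{>k} for k = 0, 1, 2, ... returns 'safe' then P is safe, and if it returns 'unsafe' then P is unsafe, assuming the oracle SAFE is sound (returns 'safe' only on safe programs and 'unsafe' only on unsafe programs) and the decomposition lemma holds. -/
import Mathlib


inductive Answer where
  | isSafe | isUnsafe | isUnknown
deriving DecidableEq

/-- The verification algorithm (programs modeled as sets of feasible
counterexample traces with dimensions) returns answer `a`: at some iteration `k`,
after all earlier iterations passed (at-most part safe, at-least part unknown),
it returns either the non-safe answer on `P^{≤k}` or the non-unknown answer on
`P^{>k}`. -/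
def Returns {τ : Type*} (oracle : Set τ → Answer) (T : Set τ) (dim : τ → ℕ)
    (a : Answer) : Prop :=
  ∃ k : ℕ,
    (∀ j < k, oracle {t ∈ T | dim t ≤ j} = .isSafe ∧
              oracle {t ∈ T | dim t > j} = .isUnknown) ∧
    ((oracle {t ∈ T | dim t ≤ k} = a ∧ a ≠ .isSafe) ∨
     (oracle {t ∈ T | dim t ≤ k} = .isSafe ∧
        oracle {t ∈ T | dim t > k} = a ∧ a ≠ .isUnknown))

/-- Soundness of the verification algorithm, given a sound oracle. -/
theorem verify_sound {τ : Type*} (oracle : Set τ → Answer)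
    (hsafe : ∀ S : Set τ, oracle S = .isSafe → S = ∅)
    (hunsafe : ∀ S : Set τ, oracle S = .isUnsafe → S ≠ ∅)
    (T : Set τ) (dim : τ → ℕ) :
    (Returns oracle T dim .isSafe → T = ∅) ∧
    (Returns oracle T dim .isUnsafe → T ≠ ∅) := by
  constructor
  · rintro ⟨k, -, (⟨-, hne⟩ | ⟨h1, h2, -⟩)⟩
    · exact absurd rfl hne
    · have e1 := hsafe _ h1
      have e2 := hsafe _ h2
      ext t
      simp only [Set.mem_empty_iff_false, iff_false]
      intro ht
      rcases le_or_gt (dim t) k with h | h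
      · have : t ∈ ({t ∈ T | dim t ≤ k} : Set τ) := ⟨ht, h⟩
        rw [e1] at this; exact this
      · have : t ∈ ({t ∈ T | dim t > k} : Set τ) := ⟨ht, h⟩
        rw [e2] at this; exact this
  · rintro ⟨k, -, (⟨h1, -⟩ | ⟨-, h2, -⟩)⟩
    · have := hunsafe _ h1
      intro hT
      apply this
      ext t
      simp only [Set.mem_empty_iff_false, iff_false, Set.mem_setOf_eq]
      rintro ⟨ht, -⟩; rw [hT] at ht; exact ht
    · have := hunsafe _ h2
      intro hT
      apply this
      ext t
      simp only [Set.mem_empty_iff_false, iff_false, Set.mem_setOf_eq]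
      rintro ⟨ht, -⟩; rw [hT] at ht; exact ht
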